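/- Let χ be an even Dirichlet character modulo q (i.e., χ(−1) = 1) that is non-principal. Then S(χ) = 2·S₀(χ), where S₀(χ) = sup_N |∑_{n=1}^{N} χ(n)| and S(χ) = sup_{M,N} |∑_{n=M+1}^{M+N} χ(n)|. -/

import Mathlib

open Finset

namespace Stmt5Aux

variable {q : ℕ} [NeZero q] (χ : DirichletCharacter ℂ q)

noncomputable def f (χ : DirichletCharacter ℂ q) (N : ℕ) : ℂ :=
  ∑ n ∈ Finset.Icc 1 N, χ (n : ZMod q)

lemma f_eq (N : ℕ) : f χ N = ∑ n ∈ Finset.Ioc 0 N, χ (n : ZMod q) := by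
  rw [f, ← Finset.Icc_add_one_left_eq_Ioc, zero_add]

lemma interval_eq (M N : ℕ) :
    ∑ n ∈ Finset.Icc (M + 1) (M + N), χ (n : ZMod q) = f χ (M + N) - f χ M := by
  have h := Finset.sum_Ioc_consecutive (fun n : ℕ => χ (n : ZMod q))
    (Nat.zero_le M) (Nat.le_add_right M N)
  rw [f_eq, f_eq, ← h, Finset.Icc_add_one_left_eq_Ioc]
  ring

lemma sum_range_zmod (g : ZMod q → ℂ) :
    ∑ n ∈ Finset.range q, g (n : ZMod q) = ∑ x : ZMod q, g x := by
  refine Finset.sum_nbij' (fun n => (n : ZMod q)) (fun x : ZMod q => x.val) ?_ ?_ ?_ ?_ ?_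
  · intro a _; exact Finset.mem_univ _
  · intro a _; exact Finset.mem_range.mpr (ZMod.val_lt a)
  · intro a ha; exact ZMod.val_cast_of_lt (Finset.mem_range.mp ha)
  · intro a _; exact ZMod.natCast_zmod_val a
  · intro a _; rfl

lemma sum_univ_zero (hχ : χ ≠ 1) : ∑ x : ZMod q, χ x = 0 :=
  MulChar.sum_eq_zero_of_ne_one hχ

lemma f_period (hχ : χ ≠ 1) (N : ℕ) : f χ (N + q) = f χ N := by
  have h := Finset.sum_Ioc_consecutive (fun n : ℕ => χ (n : ZMod q))
    (Nat.zero_le N) (Nat.le_add_right N q)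
  have h2 : ∑ n ∈ Finset.Ioc N (N + q), χ (n : ZMod q) = 0 := by
    have he : Finset.Ioc N (N + q) = Finset.Ico (N + 1) (N + q + 1) := by
      ext x; simp only [Finset.mem_Ioc, Finset.mem_Ico]; omega
    rw [he, Finset.sum_Ico_eq_sum_range]
    have hd : N + q + 1 - (N + 1) = q := by omega
    rw [hd]
    have hc : ∀ i : ℕ, χ ((N + 1 + i : ℕ) : ZMod q) =
        (fun x : ZMod q => χ (((N + 1 : ℕ) : ZMod q) + x)) ((i : ℕ) : ZMod q) := by
      intro i; push_cast; ring_nf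
    rw [Finset.sum_congr rfl (fun i _ => hc i),
      sum_range_zmod (fun x => χ (((N + 1 : ℕ) : ZMod q) + x))]
    have := Fintype.sum_equiv (Equiv.addLeft (((N + 1 : ℕ) : ZMod q)))
      (fun x : ZMod q => χ (((N + 1 : ℕ) : ZMod q) + x)) (fun x => χ x) (fun x => rfl)
    rw [this]
    exact sum_univ_zero χ hχ
  rw [f_eq, f_eq, ← h, h2, add_zero]

lemma f_mod (hχ : χ ≠ 1) (N : ℕ) : f χ N = f χ (N % q) := by
  have key : ∀ k m : ℕ, f χ (m + q * k) = f χ m := by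
    intro k
    induction k with
    | zero => simp
    | succ k ih =>
      intro m
      have : m + q * (k + 1) = (m + q * k) + q := by ring
      rw [this, f_period χ hχ, ih]
  conv_lhs => rw [← Nat.mod_add_div N q]
  exact key _ _

lemma chi_zero (hq : 1 < q) : χ (0 : ZMod q) = 0 := by
  haveI : Fact (1 < q) := ⟨hq⟩
  exact χ.map_nonunit (by rw [isUnit_zero_iff]; exact zero_ne_one)

lemma f_total (hχ : χ ≠ 1) (hq : 1 < q) : f χ (q - 1) = 0 := by
  have h1 : ∑ n ∈ Finset.range q, χ (n : ZMod q) = 0 := by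
    rw [sum_range_zmod]; exact sum_univ_zero χ hχ
  have h2 : Finset.range q = Finset.Ico 0 q := Finset.range_eq_Ico q
  rw [h2, Finset.sum_eq_sum_Ico_succ_bot (by omega : (0:ℕ) < q)] at h1
  rw [Nat.cast_zero, chi_zero χ hq, zero_add] at h1
  rw [f_eq]
  have h3 : Finset.Ico (0 + 1) q = Finset.Ioc 0 (q - 1) := by
    ext x; simp only [Finset.mem_Ico, Finset.mem_Ioc]; omega
  rw [← h3]; exact h1

lemma f_reflect (hχ : χ ≠ 1) (hq : 1 < q) (hχeven : χ.Even) {N : ℕ} (hN : N ≤ q - 1) :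
    f χ (q - 1 - N) = - f χ N := by
  have hsplit := Finset.sum_Ioc_consecutive (fun n : ℕ => χ (n : ZMod q))
    (Nat.zero_le (q - 1 - N)) (by omega : q - 1 - N ≤ q - 1)
  have hrefl : ∑ n ∈ Finset.Ioc 0 N, χ (n : ZMod q)
      = ∑ n ∈ Finset.Ioc (q - 1 - N) (q - 1), χ (n : ZMod q) := by
    refine Finset.sum_nbij' (fun n => q - n) (fun n => q - n) ?_ ?_ ?_ ?_ ?_
    · intro a ha; simp only [Finset.mem_Ioc] at *; omega
    · intro a ha; simp only [Finset.mem_Ioc] at *; omega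
    · intro a ha; simp only [Finset.mem_Ioc] at ha; omega
    · intro a ha; simp only [Finset.mem_Ioc] at ha; omega
    · intro a ha
      simp only [Finset.mem_Ioc] at ha
      have hle : a ≤ q := by omega
      have hc : ((q - a : ℕ) : ZMod q) = - (a : ZMod q) := by
        push_cast [Nat.cast_sub hle]
        simp
      rw [hc, hχeven.eval_neg]
  have ht := f_total χ hχ hq
  rw [f_eq] at ht
  rw [← hsplit, ← hrefl, ← f_eq, ← f_eq] at ht
  linear_combination ht

lemma f_bound (hχ : χ ≠ 1) (N : ℕ) : ‖f χ N‖ ≤ q := by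
  rw [f_mod χ hχ]
  calc ‖f χ (N % q)‖
      ≤ ∑ n ∈ Finset.Icc 1 (N % q), ‖χ (n : ZMod q)‖ := by
        simpa [f] using (norm_sum_le _ _)
    _ ≤ ∑ _n ∈ Finset.Icc 1 (N % q), (1 : ℝ) := by
        refine Finset.sum_le_sum fun n _ => ?_
        simpa using χ.norm_le_one (n : ZMod q)
    _ = (Finset.Icc 1 (N % q)).card := by simp
    _ ≤ q := by
        simp only [Nat.card_Icc]
        have := Nat.mod_lt N (NeZero.pos q)
        exact_mod_cast by omega

end Stmt5Aux

theorem stmt_5 {q : ℕ} [NeZero q] (χ : DirichletCharacter ℂ q) (hχ : χ ≠ 1)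
    (hχeven : χ.Even) :
    (⨆ M : ℕ, ⨆ N : ℕ, ‖∑ n ∈ Finset.Icc (M + 1) (M + N), χ (n : ZMod q)‖) =
      2 * ⨆ N : ℕ, ‖∑ n ∈ Finset.Icc 1 N, χ (n : ZMod q)‖ := by
  classical
  have hq : 1 < q := by
    rcases Nat.lt_or_ge q 2 with h | h
    · interval_cases q
      · exact absurd rfl (NeZero.ne 0)
      · exact absurd (DirichletCharacter.level_one χ) hχ
    · omega
  set f := Stmt5Aux.f χ with hf
  set F : ℕ → ℝ := fun N => ‖f N‖ with hF
  set G : ℕ → ℕ → ℝ := fun M N =>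
    ‖∑ n ∈ Finset.Icc (M + 1) (M + N), χ (n : ZMod q)‖ with hG
  have hGF : ∀ M N, G M N = ‖f (M + N) - f M‖ := by
    intro M N; rw [hG]; simp only []; rw [Stmt5Aux.interval_eq]
  have hFb : ∀ N, F N ≤ q := fun N => Stmt5Aux.f_bound χ hχ N
  have hF0 : ∀ N, 0 ≤ F N := fun N => norm_nonneg _
  have bddF : BddAbove (Set.range F) := ⟨q, by rintro x ⟨N, rfl⟩; exact hFb N⟩
  have hGb : ∀ M N, G M N ≤ 2 * q := by
    intro M N
    rw [hGF]
    calc ‖f (M + N) - f M‖ ≤ ‖f (M+N)‖ + ‖f M‖ := by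
          simpa using norm_sub_le (f (M+N)) (f M)
      _ ≤ q + q := add_le_add (hFb _) (hFb _)
      _ = 2 * q := by ring
  have bddG : ∀ M, BddAbove (Set.range (G M)) :=
    fun M => ⟨2 * q, by rintro x ⟨N, rfl⟩; exact hGb M N⟩
  set H : ℕ → ℝ := fun M => ⨆ N, G M N with hH
  have bddH : BddAbove (Set.range H) := by
    refine ⟨2 * q, ?_⟩
    rintro x ⟨M, rfl⟩
    exact ciSup_le (hGb M)
  set S : ℝ := ⨆ M, H M with hS
  set S₀ : ℝ := ⨆ N, F N with hS₀
  have hGle : ∀ M N, G M N ≤ S := by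
    intro M N
    exact le_trans (le_ciSup (bddG M) N) (le_ciSup bddH M)
  have hFle : ∀ N, F N ≤ S₀ := fun N => le_ciSup bddF N
  -- upper bound: S ≤ 2 * S₀
  have upper : S ≤ 2 * S₀ := by
    refine ciSup_le fun M => ciSup_le fun N => ?_
    rw [hGF]
    calc ‖f (M + N) - f M‖ ≤ ‖f (M+N)‖ + ‖f M‖ := by
          simpa using norm_sub_le (f (M+N)) (f M)
      _ ≤ S₀ + S₀ := add_le_add (hFle _) (hFle _)
      _ = 2 * S₀ := by ring
  -- lower bound
  have claim : ∀ n : ℕ, n ≤ q - 1 → 2 * n + 1 ≤ q → 2 * F n ≤ S := by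
    intro n hn1 hn2
    have hlen : n + (q - 2 * n - 1) = q - 1 - n := by omega
    have hG2 : G n (q - 2 * n - 1) = 2 * F n := by
      have hr := Stmt5Aux.f_reflect χ hχ hq hχeven hn1
      rw [← hf] at hr
      rw [hGF, hlen, hr, hF]
      have : -f n - f n = -(2 * f n) := by ring
      rw [this, norm_neg, norm_mul]
      simp
    rw [← hG2]; exact hGle _ _
  have lower : ∀ N, 2 * F N ≤ S := by
    intro N
    have hm : N % q < q := Nat.mod_lt N (NeZero.pos q)
    have hFN : F N = F (N % q) := by
      have hmod := Stmt5Aux.f_mod χ hχ N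
      rw [← hf] at hmod
      rw [hF]; simp only []; rw [hmod]
    set m := N % q with hm'
    rcases le_or_gt (2 * m + 1) q with h | h
    · rw [hFN]; exact claim m (by omega) h
    · have hrefl : F (q - 1 - m) = F m := by
        have hr := Stmt5Aux.f_reflect χ hχ hq hχeven (by omega : m ≤ q - 1)
        rw [← hf] at hr
        rw [hF]; simp only []; rw [hr]
        exact norm_neg _
      rw [hFN, ← hrefl]
      exact claim (q - 1 - m) (by omega) (by omega)
  have lower' : 2 * S₀ ≤ S := by
    have : S₀ ≤ S / 2 := ciSup_le fun N => by linarith [lower N]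
    linarith
  have : S = 2 * S₀ := le_antisymm upper lower'
  calc (⨆ M : ℕ, ⨆ N : ℕ,
        ‖∑ n ∈ Finset.Icc (M + 1) (M + N), χ (n : ZMod q)‖) = S := rfl
    _ = 2 * S₀ := this
    _ = 2 * ⨆ N : ℕ, ‖∑ n ∈ Finset.Icc 1 N, χ (n : ZMod q)‖ := rfl
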